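/- Let α : ℝ → ℓ²(ℤ;ℂ) be continuously differentiable with M(α(t)) := -Σ_n ln(1 - ε|α_n(t)|²) conserved in time (ε = ±1). If ‖α(0)‖_{ℓ²}² ≤ 1/100, then the bound ‖α(t)‖_{ℓ²}² ≤ 1/20 holds for all t, and moreover (1/2)|M(α(t))| ≤ ‖α(t)‖_{ℓ²}² ≤ 2|M(α(t))| for all t. -/
import Mathlib

open MeasureTheory Real
open scoped ENNReal

lemma stmt10_pt1 {x : ℝ} (hx0 : 0 ≤ x) (hx : x ≤ 1/20) :
    x ≤ -Real.log (1 - x) ∧ -Real.log (1 - x) ≤ (20/19) * x := by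
  have h1 : (0:ℝ) < 1 - x := by linarith
  constructor
  · have := Real.log_le_sub_one_of_pos h1
    linarith
  · have hmul : Real.exp (-(20/19 * x)) * Real.exp (20/19 * x) = 1 := by
      rw [← Real.exp_add]; simp
    have key : 1 ≤ (1 - x) * Real.exp (20/19 * x) := by
      nlinarith [Real.add_one_le_exp (20/19 * x)]
    have h2 : Real.exp (-(20/19 * x)) ≤ 1 - x := by
      nlinarith [Real.exp_pos (-(20/19 * x)), Real.exp_pos (20/19 * x)]
    have := (Real.le_log_iff_exp_le h1).mpr h2
    linarith

lemma stmt10_pt2 {x : ℝ} (hx0 : 0 ≤ x) (hx : x ≤ 1/20) :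
    (20/21) * x ≤ Real.log (1 + x) ∧ Real.log (1 + x) ≤ x := by
  have h1 : (0:ℝ) < 1 + x := by linarith
  constructor
  · have hmul : Real.exp (20/21 * x) * Real.exp (-(20/21 * x)) = 1 := by
      rw [← Real.exp_add]; simp
    have key : 1 ≤ (1 + x) * Real.exp (-(20/21 * x)) := by
      nlinarith [Real.add_one_le_exp (-(20/21 * x))]
    have h2 : Real.exp (20/21 * x) ≤ 1 + x := by
      nlinarith [Real.exp_pos (-(20/21 * x)), Real.exp_pos (20/21 * x)]
    exact (Real.le_log_iff_exp_le h1).mpr h2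
  · have := Real.log_le_sub_one_of_pos h1
    linarith

/-- Two-sided comparison between `∑ x_n` and `|∑ log(1 - ε x_n)|`. -/
lemma stmt10_aux (x : ℤ → ℝ) (hx0 : ∀ n, 0 ≤ x n) (hb : ∀ n, x n ≤ 1/20)
    (hs : Summable x) (ε : ℝ) (hε : ε = 1 ∨ ε = -1) :
    (20/21) * (∑' n, x n) ≤ |∑' n, Real.log (1 - ε * x n)| ∧
      |∑' n, Real.log (1 - ε * x n)| ≤ (20/19) * (∑' n, x n) := by
  have hts : 0 ≤ ∑' n, x n := tsum_nonneg hx0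
  rcases hε with rfl | rfl
  · -- ε = 1
    set g : ℤ → ℝ := fun n => -Real.log (1 - x n) with hg
    have hgl : ∀ n, x n ≤ g n := fun n => (stmt10_pt1 (hx0 n) (hb n)).1
    have hgu : ∀ n, g n ≤ (20/19) * x n := fun n => (stmt10_pt1 (hx0 n) (hb n)).2
    have hg0 : ∀ n, 0 ≤ g n := fun n => le_trans (hx0 n) (hgl n)
    have hgs : Summable g := Summable.of_nonneg_of_le hg0 hgu (hs.mul_left _)
    have he : (fun n : ℤ => Real.log (1 - 1 * x n)) = fun n => -(g n) := by
      funext n; simp [hg]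
    rw [he, tsum_neg, abs_neg, abs_of_nonneg (tsum_nonneg hg0)]
    constructor
    · have h1 : ∑' n, x n ≤ ∑' n, g n := Summable.tsum_le_tsum hgl hs hgs
      linarith
    · have h2 : ∑' n, g n ≤ ∑' n, (20/19) * x n := Summable.tsum_le_tsum hgu hgs (hs.mul_left _)
      rw [tsum_mul_left] at h2
      linarith
  · -- ε = -1
    set g : ℤ → ℝ := fun n => Real.log (1 + x n) with hg
    have hgl : ∀ n, (20/21) * x n ≤ g n := fun n => (stmt10_pt2 (hx0 n) (hb n)).1
    have hgu : ∀ n, g n ≤ x n := fun n => (stmt10_pt2 (hx0 n) (hb n)).2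
    have hg0 : ∀ n, 0 ≤ g n := fun n =>
      le_trans (by nlinarith [hx0 n]) (hgl n)
    have hgs : Summable g := Summable.of_nonneg_of_le hg0 hgu hs
    have he : (fun n : ℤ => Real.log (1 - (-1) * x n)) = g := by
      funext n; simp [hg]
    rw [he, abs_of_nonneg (tsum_nonneg hg0)]
    constructor
    · have h1 : ∑' n, (20/21) * x n ≤ ∑' n, g n := Summable.tsum_le_tsum hgl (hs.mul_left _) hgs
      rw [tsum_mul_left] at h1
      linarith
    · have h2 : ∑' n, g n ≤ ∑' n, x n := Summable.tsum_le_tsum hgu hgs hs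
      linarith

lemma stmt10_sq_sum_eq (B : lp (fun _ : ℤ => ℂ) 2) :
    ∑' n : ℤ, ‖(B : ∀ _ : ℤ, ℂ) n‖ ^ 2 = ‖B‖ ^ 2 := by
  have h := lp.norm_rpow_eq_tsum (p := 2) (by norm_num) B
  have e : ∀ y : ℝ, 0 ≤ y → y ^ (2:ℝ≥0∞).toReal = y ^ 2 := by
    intro y hy
    rw [show ((2:ℝ≥0∞).toReal) = ((2:ℕ):ℝ) by norm_num, Real.rpow_natCast]
  rw [e _ (norm_nonneg _)] at h
  rw [h]
  exact tsum_congr fun n => (e _ (norm_nonneg _)).symm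

lemma stmt10_summable (B : lp (fun _ : ℤ => ℂ) 2) :
    Summable (fun n : ℤ => ‖(B : ∀ _ : ℤ, ℂ) n‖ ^ 2) := by
  have h := (lp.memℓp B).summable (p := 2) (by norm_num)
  have e : ∀ n : ℤ, ‖(B : ∀ _ : ℤ, ℂ) n‖ ^ (2:ℝ≥0∞).toReal = ‖(B : ∀ _ : ℤ, ℂ) n‖ ^ 2 := by
    intro n
    rw [show ((2:ℝ≥0∞).toReal) = ((2:ℕ):ℝ) by norm_num, Real.rpow_natCast]
  simpa [e] using h

/-- Global `ℓ²` bound from conservation of the mass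
`M(α(t)) = -Σ_n ln(1 - ε|α_n(t)|²)`: if `‖α(0)‖_{ℓ²}² ≤ 1/100` then
`‖α(t)‖_{ℓ²}² ≤ 1/20` for all `t`, and `½|M(α(t))| ≤ ‖α(t)‖_{ℓ²}² ≤ 2|M(α(t))|`. -/
theorem stmt10 (ε : ℝ) (hε : ε = 1 ∨ ε = -1)
    (A : ℝ → lp (fun _ : ℤ => ℂ) 2) (hA : ContDiff ℝ 1 A)
    (hM : ∀ t : ℝ,
      (∑' n : ℤ, Real.log (1 - ε * ‖(A t : ∀ _ : ℤ, ℂ) n‖ ^ 2))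
        = ∑' n : ℤ, Real.log (1 - ε * ‖(A 0 : ∀ _ : ℤ, ℂ) n‖ ^ 2))
    (h0 : ∑' n : ℤ, ‖(A 0 : ∀ _ : ℤ, ℂ) n‖ ^ 2 ≤ 1 / 100) :
    ∀ t : ℝ,
      (∑' n : ℤ, ‖(A t : ∀ _ : ℤ, ℂ) n‖ ^ 2 ≤ 1 / 20) ∧
      (1 / 2) * |∑' n : ℤ, Real.log (1 - ε * ‖(A t : ∀ _ : ℤ, ℂ) n‖ ^ 2)|
        ≤ ∑' n : ℤ, ‖(A t : ∀ _ : ℤ, ℂ) n‖ ^ 2 ∧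
      ∑' n : ℤ, ‖(A t : ∀ _ : ℤ, ℂ) n‖ ^ 2
        ≤ 2 * |∑' n : ℤ, Real.log (1 - ε * ‖(A t : ∀ _ : ℤ, ℂ) n‖ ^ 2)| := by
  set f : ℝ → ℝ := fun t => ∑' n : ℤ, ‖(A t : ∀ _ : ℤ, ℂ) n‖ ^ 2 with hf
  set M : ℝ → ℝ := fun t => ∑' n : ℤ, Real.log (1 - ε * ‖(A t : ∀ _ : ℤ, ℂ) n‖ ^ 2) with hMdef
  have hf0 : ∀ t, 0 ≤ f t := fun t => tsum_nonneg (fun n => by positivity)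
  have hsum : ∀ t, Summable (fun n : ℤ => ‖(A t : ∀ _ : ℤ, ℂ) n‖ ^ 2) :=
    fun t => stmt10_summable (A t)
  have hle : ∀ t n, ‖(A t : ∀ _ : ℤ, ℂ) n‖ ^ 2 ≤ f t :=
    fun t n => Summable.le_tsum (hsum t) n (fun j _ => by positivity)
  -- The two-sided estimate under the bootstrap assumption
  have haux : ∀ t, f t ≤ 1/20 →
      (20/21) * f t ≤ |M t| ∧ |M t| ≤ (20/19) * f t := by
    intro t ht
    exact stmt10_aux _ (fun n => by positivity)
      (fun n => le_trans (hle t n) ht) (hsum t) ε hε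
  -- Bound on the conserved quantity
  have hf00 : f 0 ≤ 1/20 := by rw [hf]; dsimp only; linarith
  have hM0 : |M 0| ≤ 1/95 := by
    have := (haux 0 hf00).2
    have h0' : f 0 ≤ 1/100 := h0
    linarith
  -- Bootstrap: on {f ≤ 1/20} in fact f ≤ 21/1900 < 1/20
  have himp : ∀ t, f t ≤ 1/20 → f t ≤ 21/1900 := by
    intro t ht
    have h1 := (haux t ht).1
    have h2 : |M t| = |M 0| := by rw [hMdef]; dsimp only; rw [hM t]
    rw [h2] at h1
    linarith
  -- Continuity of f
  have hfc : Continuous f := by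
    have : f = fun t => ‖A t‖ ^ 2 := by
      funext t; exact stmt10_sq_sum_eq (A t)
    rw [this]
    exact (hA.continuous.norm).pow 2
  -- Clopen argument
  have hsetEq : {t : ℝ | f t ≤ 1/20} = {t : ℝ | f t < 1/20} := by
    apply Set.Subset.antisymm
    · intro t ht
      have := himp t ht
      simp only [Set.mem_setOf_eq] at *
      linarith
    · exact fun t ht => show f t ≤ 1/20 from le_of_lt ht
  have hclopen : IsClopen {t : ℝ | f t ≤ 1/20} := by
    constructor
    · exact isClosed_le hfc continuous_const
    · rw [hsetEq]; exact isOpen_lt hfc continuous_const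
  have huniv : {t : ℝ | f t ≤ 1/20} = Set.univ :=
    hclopen.eq_univ ⟨0, hf00⟩
  have hall : ∀ t, f t ≤ 1/20 := by
    intro t
    have : t ∈ {t : ℝ | f t ≤ 1/20} := by rw [huniv]; trivial
    exact this
  intro t
  obtain ⟨h1, h2⟩ := haux t (hall t)
  refine ⟨hall t, ?_, ?_⟩
  · show (1/2) * |M t| ≤ f t
    linarith [hf0 t]
  · show f t ≤ 2 * |M t|
    linarith [hf0 t]
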